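/- For every even integer M ≥ 4 and every integer k ≥ 0 there is a constant C > 0 such that for every measurable φ : ℝ → ℂ with ‖φ/(1+|y|^{M+k})‖_{L∞} < ∞: ‖P_-(φ)/(1 + |y|^{M+k})‖_{L∞(ℝ)} ≤ C·‖φ/(1 + |y|^{M+k})‖_{L∞(ℝ)}. -/

import Mathlib

open MeasureTheory

/-- The `m`-th rescaled Hermite polynomial. -/
noncomputable def hpoly (m : ℕ) (y : ℝ) : ℝ :=
  ∑ n ∈ Finset.range (m / 2 + 1),
    ((Nat.factorial m : ℝ) / ((Nat.factorial n : ℝ) * (Nat.factorial (m - 2 * n) : ℝ))) *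
      (-1 : ℝ) ^ n * y ^ (m - 2 * n)

/-- The Gaussian weight `ρ(y) = (4π)^{−1/2} e^{−y²/4}`. -/
noncomputable def gw (y : ℝ) : ℝ := (4 * Real.pi) ^ (-(1 : ℝ) / 2) * Real.exp (-y ^ 2 / 4)

/-- Coefficient of `φ` on `h_n`: `Q_n(φ) = (∫ φ h_n ρ)/(∫ h_n² ρ)`. -/
noncomputable def Qcoef (r : ℝ → ℂ) (n : ℕ) : ℂ :=
  (∫ y : ℝ, r y * ((hpoly n y : ℝ) : ℂ) * ((gw y : ℝ) : ℂ)) /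
    (((∫ y : ℝ, (hpoly n y) ^ 2 * gw y) : ℝ) : ℂ)

/-- The "infinite-dimensional" projection `P_-φ = φ − Σ_{n≤M} Q_n(φ) h_n`. -/
noncomputable def Pminus (M : ℕ) (r : ℝ → ℂ) (y : ℝ) : ℂ :=
  r y - ∑ n ∈ Finset.range (M + 1), Qcoef r n * ((hpoly n y : ℝ) : ℂ)

/-! ### Auxiliary lemmas -/

lemma gw_pos (y : ℝ) : 0 < gw y := by
  unfold gw
  have h : (0 : ℝ) < 4 * Real.pi := by positivity
  positivity

lemma gw_cont : Continuous gw := by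
  unfold gw
  exact continuous_const.mul (Real.continuous_exp.comp (by fun_prop))

lemma hpoly_cont (n : ℕ) : Continuous (hpoly n) := by
  unfold hpoly
  exact continuous_finset_sum _ fun i _ => by fun_prop

lemma pow_le_one_add (j p : ℕ) (h : j ≤ p) (y : ℝ) : |y| ^ j ≤ 1 + |y| ^ p := by
  rcases le_total (|y|) 1 with hy | hy
  · have h1 : |y| ^ j ≤ 1 := pow_le_one₀ (abs_nonneg y) hy
    have h2 : (0 : ℝ) ≤ |y| ^ p := pow_nonneg (abs_nonneg y) p
    linarith
  · have h1 : |y| ^ j ≤ |y| ^ p := pow_le_pow_right₀ hy h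
    linarith

lemma one_add_pow_mul (a b : ℕ) (y : ℝ) :
    (1 + |y| ^ a) * (1 + |y| ^ b) ≤ 4 * (1 + |y| ^ (a + b)) := by
  have h1 := pow_le_one_add a (a + b) (Nat.le_add_right _ _) y
  have h2 := pow_le_one_add b (b + a) (Nat.le_add_right _ _) y
  have h3 : |y| ^ a * |y| ^ b = |y| ^ (a + b) := (pow_add _ _ _).symm
  have h4 : |y| ^ (b + a) = |y| ^ (a + b) := by rw [Nat.add_comm]
  rw [h4] at h2
  nlinarith [pow_nonneg (abs_nonneg y) (a + b), pow_nonneg (abs_nonneg y) a,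
    pow_nonneg (abs_nonneg y) b]

lemma hpoly_bound (n p : ℕ) (hnp : n ≤ p) :
    ∃ A : ℝ, 0 < A ∧ ∀ y : ℝ, |hpoly n y| ≤ A * (1 + |y| ^ p) := by
  refine ⟨∑ i ∈ Finset.range (n / 2 + 1),
      (Nat.factorial n : ℝ) / ((Nat.factorial i : ℝ) * (Nat.factorial (n - 2 * i) : ℝ)), ?_, ?_⟩
  · apply Finset.sum_pos
    · intro i _
      positivity
    · exact ⟨0, Finset.mem_range.mpr (Nat.succ_pos _)⟩
  · intro y
    rw [Finset.sum_mul]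
    unfold hpoly
    refine (Finset.abs_sum_le_sum_abs _ _).trans (Finset.sum_le_sum ?_)
    intro i _
    have hc : (0 : ℝ) ≤ (Nat.factorial n : ℝ) /
        ((Nat.factorial i : ℝ) * (Nat.factorial (n - 2 * i) : ℝ)) := by positivity
    rw [abs_mul, abs_mul, abs_pow, abs_pow, abs_neg, abs_one, one_pow, mul_one,
      abs_of_nonneg hc]
    exact mul_le_mul_of_nonneg_left
      (pow_le_one_add _ _ ((Nat.sub_le _ _).trans hnp) y) hc

lemma integrable_weight (q : ℕ) : Integrable (fun y : ℝ => (1 + |y| ^ q) * gw y) := by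
  have hb : (0 : ℝ) < 1 / 4 := by norm_num
  have h1 : Integrable (fun y : ℝ => Real.exp (-(1 / 4) * y ^ 2)) :=
    integrable_exp_neg_mul_sq hb
  have h2 : Integrable (fun y : ℝ => y ^ ((2 * q : ℕ) : ℝ) * Real.exp (-(1 / 4) * y ^ 2)) :=
    integrable_rpow_mul_exp_neg_mul_sq hb
      (lt_of_lt_of_le (by norm_num) (Nat.cast_nonneg _))
  have h2' : Integrable (fun y : ℝ => y ^ (2 * q) * Real.exp (-(1 / 4) * y ^ 2)) := by
    simpa only [Real.rpow_natCast] using h2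
  set c : ℝ := (4 * Real.pi) ^ (-(1 : ℝ) / 2) with hc
  have hc0 : 0 < c := by
    have h : (0 : ℝ) < 4 * Real.pi := by positivity
    rw [hc]; positivity
  have hmaj : Integrable
      (fun y : ℝ => c * (2 * Real.exp (-(1 / 4) * y ^ 2)
        + y ^ (2 * q) * Real.exp (-(1 / 4) * y ^ 2))) :=
    ((h1.const_mul 2).add h2').const_mul c
  refine hmaj.mono ?_ (ae_of_all _ fun y => ?_)
  · exact ((continuous_const.add ((continuous_abs.pow q))).mul gw_cont).aestronglyMeasurable
  · have hyq : |y| ^ q ≤ 1 + y ^ (2 * q) := by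
      have := pow_le_one_add q (2 * q) (by omega) y
      have he : |y| ^ (2 * q) = y ^ (2 * q) := by
        rw [pow_mul, pow_mul, sq_abs]
      linarith [this, he.le, he.ge]
    have hexp : gw y = c * Real.exp (-(1 / 4) * y ^ 2) := by
      unfold gw; rw [hc]; ring_nf
    have hlhs : ‖(1 + |y| ^ q) * gw y‖ = (1 + |y| ^ q) * gw y := by
      rw [Real.norm_eq_abs, abs_of_nonneg]
      have := gw_pos y
      have : (0 : ℝ) ≤ 1 + |y| ^ q := by positivity
      positivity
    rw [hlhs, Real.norm_eq_abs]
    have hrhs : (0 : ℝ) ≤ c * (2 * Real.exp (-(1 / 4) * y ^ 2)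
        + y ^ (2 * q) * Real.exp (-(1 / 4) * y ^ 2)) := by
      have h2q : (0 : ℝ) ≤ y ^ (2 * q) := by
        rw [pow_mul]; positivity
      positivity
    rw [abs_of_nonneg hrhs, hexp]
    have hE : (0 : ℝ) < Real.exp (-(1 / 4) * y ^ 2) := Real.exp_pos _
    calc (1 + |y| ^ q) * (c * Real.exp (-(1 / 4) * y ^ 2))
        ≤ (2 + y ^ (2 * q)) * (c * Real.exp (-(1 / 4) * y ^ 2)) := by
          apply mul_le_mul_of_nonneg_right (by linarith) (by positivity)
      _ = c * (2 * Real.exp (-(1 / 4) * y ^ 2)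
            + y ^ (2 * q) * Real.exp (-(1 / 4) * y ^ 2)) := by ring

lemma integrable_of_poly_bound {f : ℝ → ℝ} (hf : Continuous f) (c : ℝ) (q : ℕ)
    (h : ∀ y, |f y| ≤ c * ((1 + |y| ^ q) * gw y)) : Integrable f := by
  refine ((integrable_weight q).const_mul c).mono hf.aestronglyMeasurable
    (ae_of_all _ fun y => ?_)
  have h0 : 0 ≤ c * ((1 + |y| ^ q) * gw y) := le_trans (abs_nonneg _) (h y)
  rw [Real.norm_eq_abs, Real.norm_eq_abs, abs_of_nonneg h0]
  exact h y

lemma integrable_weighted_hpoly (n p : ℕ) :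
    Integrable (fun y : ℝ => (1 + |y| ^ p) * |hpoly n y| * gw y) := by
  obtain ⟨A, hA0, hA⟩ := hpoly_bound n n le_rfl
  refine integrable_of_poly_bound ?_ (4 * A) (p + n) fun y => ?_
  · exact ((continuous_const.add (continuous_abs.pow p)).mul (hpoly_cont n).abs).mul gw_cont
  · have hg := gw_pos y
    have hnn : (0 : ℝ) ≤ (1 + |y| ^ p) * |hpoly n y| * gw y := by positivity
    rw [abs_of_nonneg hnn]
    calc (1 + |y| ^ p) * |hpoly n y| * gw y
        ≤ (1 + |y| ^ p) * (A * (1 + |y| ^ n)) * gw y := by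
          apply mul_le_mul_of_nonneg_right _ hg.le
          exact mul_le_mul_of_nonneg_left (hA y) (by positivity)
      _ = A * ((1 + |y| ^ p) * (1 + |y| ^ n)) * gw y := by ring
      _ ≤ A * (4 * (1 + |y| ^ (p + n))) * gw y := by
          apply mul_le_mul_of_nonneg_right _ hg.le
          exact mul_le_mul_of_nonneg_left (one_add_pow_mul p n y) hA0.le
      _ = 4 * A * ((1 + |y| ^ (p + n)) * gw y) := by ring

lemma integrable_hpoly_sq (n : ℕ) :
    Integrable (fun y : ℝ => hpoly n y ^ 2 * gw y) := by
  obtain ⟨A, hA0, hA⟩ := hpoly_bound n n le_rfl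
  refine integrable_of_poly_bound ?_ (4 * A ^ 2) (n + n) fun y => ?_
  · exact (((hpoly_cont n).pow 2).mul gw_cont)
  · have hg := gw_pos y
    have hnn : (0 : ℝ) ≤ hpoly n y ^ 2 * gw y := by positivity
    rw [abs_of_nonneg hnn]
    have hsq : hpoly n y ^ 2 = |hpoly n y| ^ 2 := (sq_abs _).symm
    calc hpoly n y ^ 2 * gw y = |hpoly n y| ^ 2 * gw y := by rw [hsq]
      _ ≤ (A * (1 + |y| ^ n)) ^ 2 * gw y := by
          apply mul_le_mul_of_nonneg_right _ hg.le
          exact pow_le_pow_left₀ (abs_nonneg _) (hA y) 2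
      _ = A ^ 2 * ((1 + |y| ^ n) * (1 + |y| ^ n)) * gw y := by ring
      _ ≤ A ^ 2 * (4 * (1 + |y| ^ (n + n))) * gw y := by
          apply mul_le_mul_of_nonneg_right _ hg.le
          exact mul_le_mul_of_nonneg_left (one_add_pow_mul n n y) (by positivity)
      _ = 4 * A ^ 2 * ((1 + |y| ^ (n + n)) * gw y) := by ring

/-- The Hermite polynomial as a `Polynomial`. -/
noncomputable def hP (m : ℕ) : Polynomial ℝ :=
  ∑ n ∈ Finset.range (m / 2 + 1),
    Polynomial.C ((Nat.factorial m : ℝ) /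
      ((Nat.factorial n : ℝ) * (Nat.factorial (m - 2 * n) : ℝ)) * (-1 : ℝ) ^ n) *
      Polynomial.X ^ (m - 2 * n)

lemma hP_eval (m : ℕ) (y : ℝ) : (hP m).eval y = hpoly m y := by
  unfold hP hpoly
  rw [Polynomial.eval_finset_sum]
  refine Finset.sum_congr rfl fun i _ => ?_
  simp [mul_assoc]

lemma hP_ne_zero (m : ℕ) : hP m ≠ 0 := by
  intro h
  have hcoeff : (hP m).coeff m = 1 := by
    unfold hP
    rw [Polynomial.finset_sum_coeff]
    rw [Finset.sum_eq_single 0]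
    · have hfac : ((Nat.factorial m : ℝ)) ≠ 0 := by
        exact_mod_cast (Nat.factorial_pos m).ne'
      rw [Polynomial.coeff_C_mul, Polynomial.coeff_X_pow]
      simp only [Nat.mul_zero, Nat.sub_zero, if_pos rfl, mul_one, pow_zero,
        Nat.factorial_zero, Nat.cast_one, one_mul, if_true]
      exact div_self hfac
    · intro i hi hi0
      have hile : i ≤ m / 2 := Nat.lt_succ_iff.mp (Finset.mem_range.mp hi)
      have h2i : 2 * i ≤ m := by omega
      have hne : m ≠ m - 2 * i := by omega
      rw [Polynomial.coeff_C_mul, Polynomial.coeff_X_pow, if_neg hne, mul_zero]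
    · intro h0
      exact absurd (Finset.mem_range.mpr (Nat.succ_pos _)) h0
  rw [h] at hcoeff
  simp at hcoeff

lemma hpoly_zeros_finite (m : ℕ) : {y : ℝ | hpoly m y = 0}.Finite := by
  have := Polynomial.finite_setOf_isRoot (hP_ne_zero m)
  refine this.subset fun y hy => ?_
  simp only [Set.mem_setOf_eq, Polynomial.IsRoot, hP_eval]
  exact hy

lemma Jpos (n : ℕ) : 0 < ∫ y : ℝ, hpoly n y ^ 2 * gw y := by
  rw [integral_pos_iff_support_of_nonneg
    (fun y => by have := gw_pos y; positivity) (integrable_hpoly_sq n)]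
  have hsupp : Function.support (fun y : ℝ => hpoly n y ^ 2 * gw y)
      = {y : ℝ | hpoly n y ≠ 0} := by
    ext y
    simp only [Function.mem_support, Set.mem_setOf_eq]
    constructor
    · intro h hy
      exact h (by rw [hy]; ring)
    · intro h hy
      have := gw_pos y
      have h2 : hpoly n y ^ 2 = 0 := by
        by_contra h2
        exact absurd hy (mul_ne_zero h2 this.ne')
      exact h (pow_eq_zero_iff (n := 2) (by norm_num) |>.mp h2)
  rw [hsupp]
  by_contra hle
  push_neg at hle
  have h0 : volume {y : ℝ | hpoly n y ≠ 0} = 0 := le_antisymm hle (by simp)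
  have hcompl : volume {y : ℝ | hpoly n y = 0} = 0 :=
    (hpoly_zeros_finite n).measure_zero _
  have huniv : volume (Set.univ : Set ℝ) ≤
      volume {y : ℝ | hpoly n y ≠ 0} + volume {y : ℝ | hpoly n y = 0} := by
    refine le_trans (measure_mono ?_) (measure_union_le _ _)
    intro y _
    by_cases h : hpoly n y = 0
    · exact Set.mem_union_right _ h
    · exact Set.mem_union_left _ h
  rw [h0, hcompl, Real.volume_univ] at huniv
  simp at huniv

/-- for every even `M ≥ 4` and `k ≥ 0`, `P_-` is bounded in the
weighted L∞ norm: `‖P_-(φ)/(1+|y|^{M+k})‖_{L∞} ≤ C‖φ/(1+|y|^{M+k})‖_{L∞}`,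
formulated via arbitrary uniform bounds `D`. -/
theorem stmt17 (M : ℕ) (hMeven : Even M) (hM4 : 4 ≤ M) (k : ℕ) :
    ∃ C : ℝ, 0 < C ∧
      ∀ φ : ℝ → ℂ, Measurable φ →
        ∀ D : ℝ, (∀ y : ℝ, ‖φ y‖ ≤ D * (1 + |y| ^ (M + k))) →
        ∀ y : ℝ, ‖Pminus M φ y‖ ≤ C * D * (1 + |y| ^ (M + k)) := by
  classical
  set p := M + k with hp
  -- polynomial bounds with exponent p (via max trick)
  choose A hA0 hA using fun n : ℕ => hpoly_bound n (max n p) (le_max_left _ _)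
  have hAp : ∀ n ∈ Finset.range (M + 1), ∀ y : ℝ,
      |hpoly n y| ≤ A n * (1 + |y| ^ p) := by
    intro n hn y
    have hnp : n ≤ p := le_trans (Nat.lt_succ_iff.mp (Finset.mem_range.mp hn))
      (Nat.le_add_right _ _)
    have := hA n y
    rwa [max_eq_right hnp] at this
  set K : ℕ → ℝ := fun n => ∫ y : ℝ, (1 + |y| ^ p) * |hpoly n y| * gw y with hK
  set J : ℕ → ℝ := fun n => ∫ y : ℝ, hpoly n y ^ 2 * gw y with hJ
  have hK0 : ∀ n, 0 ≤ K n := fun n =>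
    integral_nonneg fun y => by have := gw_pos y; positivity
  have hJ0 : ∀ n, 0 < J n := fun n => Jpos n
  refine ⟨1 + ∑ n ∈ Finset.range (M + 1), K n * A n / J n, ?_, ?_⟩
  · have hsum : 0 ≤ ∑ n ∈ Finset.range (M + 1), K n * A n / J n :=
      Finset.sum_nonneg fun n _ => by
        have := hK0 n; have := hJ0 n; have := hA0 n; positivity
    linarith
  intro φ hφm D hφ y
  -- D is nonnegative
  have hD0 : 0 ≤ D := by
    have h0 := hφ 0
    have hp0 : |(0 : ℝ)| ^ p = 0 := by
      rw [abs_zero]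
      exact zero_pow (by omega)
    rw [hp0] at h0
    have := norm_nonneg (φ 0)
    linarith
  -- bound on the coefficients
  have hQ : ∀ n ∈ Finset.range (M + 1),
      ‖Qcoef φ n‖ ≤ D * K n / J n := by
    intro n _
    unfold Qcoef
    rw [norm_div, Complex.norm_real, Real.norm_eq_abs, abs_of_pos (hJ0 n)]
    apply (div_le_div_iff_of_pos_right (hJ0 n)).mpr
    · calc ‖∫ y : ℝ, φ y * ((hpoly n y : ℝ) : ℂ) * ((gw y : ℝ) : ℂ)‖
          = ‖∫ y : ℝ, φ y * ((hpoly n y : ℝ) : ℂ) * ((gw y : ℝ) : ℂ)‖ := rfl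
        _ ≤ ∫ y : ℝ, ‖φ y * ((hpoly n y : ℝ) : ℂ) * ((gw y : ℝ) : ℂ)‖ :=
            norm_integral_le_integral_norm _
        _ ≤ ∫ y : ℝ, D * ((1 + |y| ^ p) * |hpoly n y| * gw y) := by
            apply integral_mono_of_nonneg
            · exact ae_of_all _ fun y => norm_nonneg _
            · exact (integrable_weighted_hpoly n p).const_mul D
            · refine ae_of_all _ fun y => ?_
              dsimp only
              rw [norm_mul, norm_mul, Complex.norm_real, Complex.norm_real,
                Real.norm_eq_abs, Real.norm_eq_abs, abs_of_pos (gw_pos y)]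
              have hb := hφ y
              have hg := (gw_pos y).le
              calc ‖φ y‖ * |hpoly n y| * gw y
                  ≤ (D * (1 + |y| ^ p)) * |hpoly n y| * gw y := by
                    apply mul_le_mul_of_nonneg_right _ hg
                    exact mul_le_mul_of_nonneg_right hb (abs_nonneg _)
                _ = D * ((1 + |y| ^ p) * |hpoly n y| * gw y) := by ring
        _ = D * K n := integral_const_mul D _
  -- final pointwise bound
  have hsum_bound : ‖∑ n ∈ Finset.range (M + 1),
      Qcoef φ n * ((hpoly n y : ℝ) : ℂ)‖
      ≤ (∑ n ∈ Finset.range (M + 1), K n * A n / J n) * (D * (1 + |y| ^ p)) := by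
    calc ‖∑ n ∈ Finset.range (M + 1), Qcoef φ n * ((hpoly n y : ℝ) : ℂ)‖
        ≤ ∑ n ∈ Finset.range (M + 1),
            ‖Qcoef φ n * ((hpoly n y : ℝ) : ℂ)‖ := by
          exact norm_sum_le _ _
      _ ≤ ∑ n ∈ Finset.range (M + 1), (K n * A n / J n) * (D * (1 + |y| ^ p)) := by
          apply Finset.sum_le_sum
          intro n hn
          rw [norm_mul, Complex.norm_real, Real.norm_eq_abs]
          calc ‖Qcoef φ n‖ * |hpoly n y|
              ≤ (D * K n / J n) * (A n * (1 + |y| ^ p)) := by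
                apply mul_le_mul (hQ n hn) (hAp n hn y) (abs_nonneg _)
                have := hK0 n; have := hJ0 n; positivity
            _ = (K n * A n / J n) * (D * (1 + |y| ^ p)) := by
                field_simp
      _ = (∑ n ∈ Finset.range (M + 1), K n * A n / J n) * (D * (1 + |y| ^ p)) := by
          rw [← Finset.sum_mul]
  calc ‖Pminus M φ y‖
      ≤ ‖φ y‖ + ‖∑ n ∈ Finset.range (M + 1),
          Qcoef φ n * ((hpoly n y : ℝ) : ℂ)‖ := by
        unfold Pminus
        exact (norm_sub_le _ _).trans_eq rfl
    _ ≤ D * (1 + |y| ^ p)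
        + (∑ n ∈ Finset.range (M + 1), K n * A n / J n) * (D * (1 + |y| ^ p)) := by
        exact add_le_add (hφ y) hsum_bound
    _ = (1 + ∑ n ∈ Finset.range (M + 1), K n * A n / J n) * D * (1 + |y| ^ p) := by
        ring
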